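/- Let θ > 0, α < α' < β, and let b, σ, h, k₊, k₋ : ℝ → ℝ be continuous with σ(x)² > 0 for all x, and set q(x) = exp(∫₀ˣ 2b(y)/σ(y)² dy). Suppose u₁ : ℝ → ℝ is twice continuously differentiable on [α,β] and satisfies (1/2)σ(x)²u₁''(x) + b(x)u₁'(x) + θ(h(x) − λ₁)u₁(x) = 0 on [α,β] with θk₋(β)u₁(β) − u₁'(β) = 0, and u₂ : ℝ → ℝ is twice continuously differentiable on [α',β] and satisfies (1/2)σ(x)²u₂''(x) + b(x)u₂'(x) + θ(h(x) − λ₂)u₂(x) = 0 on [α',β] with θk₊(α')u₂(α') + u₂'(α') = 0 and θk₋(β)u₂(β) − u₂'(β) = 0. Then (λ₂ − λ₁) ∫_{α'}^β (2θq(y)/σ(y)²)u₁(y)u₂(y) dy = q(α')(θk₊(α')u₁(α') + u₁'(α'))u₂(α'). -/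

import Mathlib

open Set intervalIntegral

/-- identity comparing eigenpairs on the intervals `[α,β]` and
`[α',β]`; the key step in computing the derivative of the principal eigenvalue
with respect to the left boundary point. -/
theorem eigenpair_comparison_left_boundary
    (θ α α' β lam₁ lam₂ : ℝ) (hθ : 0 < θ) (hαα' : α < α') (hα'β : α' < β)
    (b σ h kp km : ℝ → ℝ)
    (hbc : Continuous b) (hσc : Continuous σ) (hhc : Continuous h)
    (hkpc : Continuous kp) (hkmc : Continuous km)
    (hσpos : ∀ x : ℝ, 0 < (σ x) ^ 2)
    (q : ℝ → ℝ)
    (hq : ∀ x : ℝ, q x = Real.exp (∫ y in (0 : ℝ)..x, 2 * b y / (σ y) ^ 2))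
    (u₁ u₂ : ℝ → ℝ)
    (hu₁1 : ∀ x ∈ Icc α β, DifferentiableAt ℝ u₁ x)
    (hu₁2 : ∀ x ∈ Icc α β, DifferentiableAt ℝ (deriv u₁) x)
    (hu₁2c : ContinuousOn (deriv (deriv u₁)) (Icc α β))
    (hODE₁ : ∀ x ∈ Icc α β,
      (1 / 2) * (σ x) ^ 2 * deriv (deriv u₁) x + b x * deriv u₁ x
        + θ * (h x - lam₁) * u₁ x = 0)
    (hbc₁β : θ * km β * u₁ β - deriv u₁ β = 0)
    (hu₂1 : ∀ x ∈ Icc α' β, DifferentiableAt ℝ u₂ x)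
    (hu₂2 : ∀ x ∈ Icc α' β, DifferentiableAt ℝ (deriv u₂) x)
    (hu₂2c : ContinuousOn (deriv (deriv u₂)) (Icc α' β))
    (hODE₂ : ∀ x ∈ Icc α' β,
      (1 / 2) * (σ x) ^ 2 * deriv (deriv u₂) x + b x * deriv u₂ x
        + θ * (h x - lam₂) * u₂ x = 0)
    (hbc₂α' : θ * kp α' * u₂ α' + deriv u₂ α' = 0)
    (hbc₂β : θ * km β * u₂ β - deriv u₂ β = 0) :
    (lam₂ - lam₁) * ∫ y in α'..β, (2 * θ * q y / (σ y) ^ 2) * u₁ y * u₂ y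
      = q α' * (θ * kp α' * u₁ α' + deriv u₁ α') * u₂ α' := by
  have hσne : ∀ x : ℝ, (σ x) ^ 2 ≠ 0 := fun x => (hσpos x).ne'
  have hsub : Icc α' β ⊆ Icc α β := Icc_subset_Icc hαα'.le le_rfl
  set f : ℝ → ℝ := fun y => 2 * b y / (σ y) ^ 2 with hfdef
  have hfc : Continuous f := (continuous_const.mul hbc).div (hσc.pow 2) hσne
  -- q has derivative q x * f x everywhere
  have hqd : ∀ x : ℝ, HasDerivAt q (q x * f x) x := by
    intro x
    have hI : HasDerivAt (fun u => ∫ y in (0:ℝ)..u, f y) (f x) x :=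
      intervalIntegral.integral_hasDerivAt_right
        (hfc.intervalIntegrable _ _)
        hfc.aestronglyMeasurable.stronglyMeasurableAtFilter
        hfc.continuousAt
    have hE := hI.exp
    have hqe : q = fun u => Real.exp (∫ y in (0:ℝ)..u, f y) := funext hq
    rw [hqe]
    simpa [hq x, mul_comm] using hE
  have hqdiff : Differentiable ℝ q := fun x => (hqd x).differentiableAt
  have hqc : Continuous q := hqdiff.continuous
  -- the Wronskian-type function
  set W : ℝ → ℝ := fun x => q x * (deriv u₁ x * u₂ x - u₁ x * deriv u₂ x) with hWdef
  set g : ℝ → ℝ := fun y => (2 * θ * q y / (σ y) ^ 2) * u₁ y * u₂ y with hgdef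
  -- derivative of W
  have hWd : ∀ x ∈ uIcc α' β, HasDerivAt W (-(lam₂ - lam₁) * g x) x := by
    intro x hx
    rw [uIcc_of_le hα'β.le] at hx
    have hx1 := hsub hx
    have h1 : HasDerivAt u₁ (deriv u₁ x) x := (hu₁1 x hx1).hasDerivAt
    have h1' : HasDerivAt (deriv u₁) (deriv (deriv u₁) x) x := (hu₁2 x hx1).hasDerivAt
    have h2 : HasDerivAt u₂ (deriv u₂ x) x := (hu₂1 x hx).hasDerivAt
    have h2' : HasDerivAt (deriv u₂) (deriv (deriv u₂) x) x := (hu₂2 x hx).hasDerivAt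
    have hW : HasDerivAt W
        (q x * f x * (deriv u₁ x * u₂ x - u₁ x * deriv u₂ x)
          + q x * ((deriv (deriv u₁) x * u₂ x + deriv u₁ x * deriv u₂ x)
            - (deriv u₁ x * deriv u₂ x + u₁ x * deriv (deriv u₂) x))) x := by
      exact (hqd x).mul ((h1'.mul h2).sub (h1.mul h2'))
    convert hW using 1
    have e₁ := hODE₁ x hx1
    have e₂ := hODE₂ x hx
    have hne := hσne x
    have s₁ : deriv (deriv u₁) x
        = -2 * (b x * deriv u₁ x + θ * (h x - lam₁) * u₁ x) / (σ x) ^ 2 := by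
      rw [eq_div_iff hne]
      linear_combination 2 * e₁
    have s₂ : deriv (deriv u₂) x
        = -2 * (b x * deriv u₂ x + θ * (h x - lam₂) * u₂ x) / (σ x) ^ 2 := by
      rw [eq_div_iff hne]
      linear_combination 2 * e₂
    rw [s₁, s₂]
    simp only [hgdef, hfdef]
    field_simp
    ring
  -- continuity / integrability of g
  have hu₁c : ContinuousOn u₁ (Icc α' β) := fun x hx =>
    ((hu₁1 x (hsub hx)).continuousAt).continuousWithinAt
  have hu₂c : ContinuousOn u₂ (Icc α' β) := fun x hx =>
    ((hu₂1 x hx).continuousAt).continuousWithinAt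
  have hgc : ContinuousOn g (Icc α' β) := by
    apply ContinuousOn.mul _ hu₂c
    apply ContinuousOn.mul _ hu₁c
    exact ((continuous_const.mul hqc).div (hσc.pow 2) hσne).continuousOn
  have hgint : IntervalIntegrable g MeasureTheory.volume α' β := by
    apply ContinuousOn.intervalIntegrable
    rwa [uIcc_of_le hα'β.le]
  have hgint' : IntervalIntegrable (fun x => -(lam₂ - lam₁) * g x)
      MeasureTheory.volume α' β := hgint.const_mul _
  have hFTC := intervalIntegral.integral_eq_sub_of_hasDerivAt hWd hgint'
  rw [intervalIntegral.integral_const_mul] at hFTC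
  -- boundary values
  have hWβ : W β = 0 := by
    have hd1 : deriv u₁ β = θ * km β * u₁ β := by linarith
    have hd2 : deriv u₂ β = θ * km β * u₂ β := by linarith
    simp only [hWdef, hd1, hd2]
    ring
  have hWα' : W α' = q α' * (θ * kp α' * u₁ α' + deriv u₁ α') * u₂ α' := by
    have hd2 : deriv u₂ α' = -(θ * kp α' * u₂ α') := by linarith
    simp only [hWdef, hd2]
    ring
  rw [hWβ, hWα'] at hFTC
  linarith
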